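/- Let λ > 2. For every g ∈ Γ_λ with |tr g| > 2 there exist an F_I-periodic orbit x₁, …, xₙ with associated matrices A₁, …, Aₙ, an element h ∈ Γ_λ and a sign ε ∈ {1, −1} such that h g h⁻¹ = ε · (Aₙ·…·A₁). (Together with the fact that such products are hyperbolic, this expresses that the equivalence classes of F_I-periodic orbits are in bijection with the conjugacy classes of hyperbolic elements of the Hecke triangle group.) -/

import Mathlib

open scoped MatrixGroups
open Matrix

/-- The Möbius action of `g ∈ SL(2,ℝ)` on real numbers, `g.x = (ax+b)/(cx+d)`. -/
noncomputable def moebius (g : SL(2, ℝ)) (x : ℝ) : ℝ :=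
  ((g : Matrix (Fin 2) (Fin 2) ℝ) 0 0 * x + (g : Matrix (Fin 2) (Fin 2) ℝ) 0 1) /
    ((g : Matrix (Fin 2) (Fin 2) ℝ) 1 0 * x + (g : Matrix (Fin 2) (Fin 2) ℝ) 1 1)

/-- The denominator `cx + d` of the Möbius action. -/
def moebiusDenom (g : SL(2, ℝ)) (x : ℝ) : ℝ :=
  (g : Matrix (Fin 2) (Fin 2) ℝ) 1 0 * x + (g : Matrix (Fin 2) (Fin 2) ℝ) 1 1

/-- `x : Fin (n+1) → ℝ` is an `F_I`-periodic orbit with associated matrices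
`A : Fin (n+1) → SL(2,ℝ)`: for each `k` (cyclically), either `xₖ ∈ (−1,0)` and `Aₖ = g₂`,
or `xₖ ∈ (0,1)` and `Aₖ = g₃`, or `xₖ ∈ (−1+mλ, −1+(m+1)λ)` and `Aₖ = T⁻ᵐ` for some
`m ≥ 1`, or `xₖ ∈ (1−(m+1)λ, 1−mλ)` and `Aₖ = Tᵐ` for some `m ≥ 1`; and `Aₖ.xₖ = xₖ₊₁`
(with nonvanishing denominator). -/
def IsFIPeriodicOrbit (lam : ℝ) (T g₂ g₃ : SL(2, ℝ)) (n : ℕ)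
    (x : Fin (n + 1) → ℝ) (A : Fin (n + 1) → SL(2, ℝ)) : Prop :=
  ∀ k : Fin (n + 1),
    ((x k ∈ Set.Ioo (-1 : ℝ) 0 ∧ A k = g₂) ∨
      (x k ∈ Set.Ioo (0 : ℝ) 1 ∧ A k = g₃) ∨
      (∃ m : ℕ, 1 ≤ m ∧ x k ∈ Set.Ioo (-1 + m * lam) (-1 + (m + 1) * lam) ∧
        A k = T⁻¹ ^ m) ∨
      (∃ m : ℕ, 1 ≤ m ∧ x k ∈ Set.Ioo (1 - (m + 1) * lam) (1 - m * lam) ∧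
        A k = T ^ m)) ∧
    moebiusDenom (A k) (x k) ≠ 0 ∧ moebius (A k) (x k) = x (k + 1)

namespace FIproof

local notation "M2" => Matrix (Fin 2) (Fin 2) ℝ

/-- Letter condition, mirroring `IsFIPeriodicOrbit`. -/
def Good (lam : ℝ) (T g₂ g₃ : SL(2, ℝ)) (p : ℝ × SL(2, ℝ)) : Prop :=
  (p.1 ∈ Set.Ioo (-1 : ℝ) 0 ∧ p.2 = g₂) ∨
    (p.1 ∈ Set.Ioo (0 : ℝ) 1 ∧ p.2 = g₃) ∨
    (∃ m : ℕ, 1 ≤ m ∧ p.1 ∈ Set.Ioo (-1 + m * lam) (-1 + (m + 1) * lam) ∧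
      p.2 = T⁻¹ ^ m) ∨
    (∃ m : ℕ, 1 ≤ m ∧ p.1 ∈ Set.Ioo (1 - (m + 1) * lam) (1 - m * lam) ∧
      p.2 = T ^ m)

/-- A chain of letters from entry point `x` to exit point `y`. -/
def Chain (lam : ℝ) (T g₂ g₃ : SL(2, ℝ)) : ℝ → List (ℝ × SL(2, ℝ)) → ℝ → Prop
  | x, [], y => x = y
  | x, p :: c, y => p.1 = x ∧ Good lam T g₂ g₃ p ∧ moebiusDenom p.2 p.1 ≠ 0 ∧
      Chain lam T g₂ g₃ (moebius p.2 p.1) c y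

section Chains

variable {lam : ℝ} {T g₂ g₃ : SL(2, ℝ)}

lemma chain_append {x y z : ℝ} {c d : List (ℝ × SL(2, ℝ))}
    (hc : Chain lam T g₂ g₃ x c y) (hd : Chain lam T g₂ g₃ y d z) :
    Chain lam T g₂ g₃ x (c ++ d) z := by
  induction c generalizing x with
  | nil => cases hc; exact hd
  | cons p c ih =>
    obtain ⟨h1, h2, h3, h4⟩ := hc
    exact ⟨h1, h2, h3, ih h4⟩

lemma chain_good {x y : ℝ} {c : List (ℝ × SL(2, ℝ))} (h : Chain lam T g₂ g₃ x c y)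
    (j : ℕ) (hj : j < c.length) :
    Good lam T g₂ g₃ (c.get ⟨j, hj⟩) ∧ moebiusDenom (c.get ⟨j, hj⟩).2 (c.get ⟨j, hj⟩).1 ≠ 0 := by
  induction c generalizing x j with
  | nil => simp at hj
  | cons p c ih =>
    obtain ⟨h1, h2, h3, h4⟩ := h
    match j with
    | 0 => exact ⟨h2, h3⟩
    | j + 1 => exact ih h4 j (by simpa using hj)

lemma chain_head {x y : ℝ} {c : List (ℝ × SL(2, ℝ))} (h : Chain lam T g₂ g₃ x c y)
    (hc : 0 < c.length) : (c.get ⟨0, hc⟩).1 = x := by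
  match c, h with
  | p :: c, ⟨h1, _, _, _⟩ => exact h1

lemma chain_step {x y : ℝ} {c : List (ℝ × SL(2, ℝ))} (h : Chain lam T g₂ g₃ x c y)
    (j : ℕ) (hj : j < c.length) :
    moebius (c.get ⟨j, hj⟩).2 (c.get ⟨j, hj⟩).1 =
      if h' : j + 1 < c.length then (c.get ⟨j+1, h'⟩).1 else y := by
  induction c generalizing x j with
  | nil => simp at hj
  | cons p c ih =>
    obtain ⟨h1, h2, h3, h4⟩ := h
    match j with
    | 0 =>
      by_cases hl : 0 + 1 < (p :: c).length
      · rw [dif_pos hl]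
        have : 0 < c.length := by simpa using hl
        simpa using (chain_head h4 this).symm
      · rw [dif_neg hl]
        have : c = [] := by
          cases c with
          | nil => rfl
          | cons q c => simp at hl
        subst this
        exact h4
    | j + 1 =>
      have := ih h4 j (by simpa using hj)
      by_cases hl : j + 1 < c.length
      · rw [dif_pos hl] at this
        rw [dif_pos (by simpa using hl)]
        simpa using this
      · rw [dif_neg hl] at this
        rw [dif_neg (by simpa using hl)]
        exact this

end Chains

lemma chain_to_orbit {lam : ℝ} {T g₂ g₃ : SL(2, ℝ)} {c : List (ℝ × SL(2, ℝ))} {x0 : ℝ}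
    (hne : c ≠ []) (h : Chain lam T g₂ g₃ x0 c x0) :
    ∃ (n : ℕ) (x : Fin (n + 1) → ℝ) (A : Fin (n + 1) → SL(2, ℝ)),
      IsFIPeriodicOrbit lam T g₂ g₃ n x A ∧ List.ofFn A = c.map Prod.snd := by
  obtain ⟨n, hn⟩ : ∃ n, c.length = n + 1 := by
    cases c with
    | nil => exact absurd rfl hne
    | cons p c => exact ⟨c.length, rfl⟩
  refine ⟨n, fun k => (c.get ⟨k.1, by omega⟩).1, fun k => (c.get ⟨k.1, by omega⟩).2, ?_, ?_⟩
  · intro k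
    have hk : (k : ℕ) < c.length := by omega
    refine ⟨(chain_good h k hk).1, (chain_good h k hk).2, ?_⟩
    have hstep := chain_step h k hk
    by_cases hl : (k : ℕ) + 1 < c.length
    · rw [dif_pos hl] at hstep
      rw [hstep]
      have hkl : (k : ℕ) < n := by omega
      have hv : ((k + 1 : Fin (n + 1)) : ℕ) = (k : ℕ) + 1 := by
        rw [Fin.val_add_one_of_lt]
        rw [Fin.lt_iff_val_lt_val, Fin.val_last]
        exact hkl
      have : (⟨(k : ℕ) + 1, hl⟩ : Fin c.length) = ⟨((k + 1 : Fin (n + 1)) : ℕ), by omega⟩ :=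
        Fin.ext hv.symm
      rw [this]
    · rw [dif_neg hl] at hstep
      rw [hstep]
      have hkn : (k : ℕ) = n := by omega
      have hk1 : (k + 1 : Fin (n + 1)) = 0 := by
        have : k = Fin.last n := Fin.ext (by simpa using hkn)
        rw [this, Fin.last_add_one]
      rw [hk1]
      exact (chain_head h (by omega)).symm
  · apply List.ext_getElem
    · simp [hn]
    · intro i h1 h2
      simp only [List.getElem_ofFn, List.getElem_map]
      congr 1

section Part2

variable {lam : ℝ} {S T g₂ g₃ : SL(2, ℝ)}
  (hS : (S : M2) = !![0, 1; -1, 0]) (hT : (T : M2) = !![1, lam; 0, 1])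
  (hg₂ : g₂ = T⁻¹ * S) (hg₃ : g₃ = T * S)

/-- The inverse branch map. -/
noncomputable def psi (lam : ℝ) (n : ℤ) (t : ℝ) : ℝ := ((n : ℝ) * lam - t)⁻¹

/-- Composition of inverse branches. -/
noncomputable def Psi (lam : ℝ) (m : List ℤ) (y : ℝ) : ℝ := m.foldr (psi lam) y

@[simp] lemma Psi_nil (lam : ℝ) (y : ℝ) : Psi lam [] y = y := rfl

@[simp] lemma Psi_cons (lam : ℝ) (n : ℤ) (m : List ℤ) (y : ℝ) :
    Psi lam (n :: m) y = psi lam n (Psi lam m y) := rfl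

lemma denom_lt (hlam : 2 < lam) {n : ℤ} (hn : n ≤ -1) {t : ℝ} (ht : t ∈ Set.Icc (-1 : ℝ) 1) :
    (n : ℝ) * lam - t < -1 := by
  have : (n : ℝ) ≤ -1 := by exact_mod_cast hn
  nlinarith [ht.1, ht.2]

lemma denom_gt (hlam : 2 < lam) {n : ℤ} (hn : 1 ≤ n) {t : ℝ} (ht : t ∈ Set.Icc (-1 : ℝ) 1) :
    1 < (n : ℝ) * lam - t := by
  have : (1 : ℝ) ≤ n := by exact_mod_cast hn
  nlinarith [ht.1, ht.2]

lemma psi_pos (hlam : 2 < lam) {n : ℤ} (hn : 1 ≤ n) {t : ℝ} (ht : t ∈ Set.Icc (-1 : ℝ) 1) :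
    psi lam n t ∈ Set.Ioo (0 : ℝ) 1 := by
  have h1 := denom_gt hlam hn ht
  exact ⟨inv_pos.2 (by linarith), inv_lt_one_of_one_lt₀ h1⟩

lemma psi_neg (hlam : 2 < lam) {n : ℤ} (hn : n ≤ -1) {t : ℝ} (ht : t ∈ Set.Icc (-1 : ℝ) 1) :
    psi lam n t ∈ Set.Ioo (-1 : ℝ) 0 := by
  have h1 := denom_lt hlam hn ht
  set a := (n : ℝ) * lam - t with ha
  have h2 : (-a)⁻¹ < 1 := inv_lt_one_of_one_lt₀ (by linarith)
  have h3 : (0 : ℝ) < (-a)⁻¹ := inv_pos.2 (by linarith)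
  have h4 : (-a)⁻¹ = -a⁻¹ := inv_neg
  constructor
  · show -1 < a⁻¹; linarith
  · show a⁻¹ < 0; linarith

lemma psi_mem (hlam : 2 < lam) {n : ℤ} (hn : n ≠ 0) {t : ℝ} (ht : t ∈ Set.Icc (-1 : ℝ) 1) :
    psi lam n t ∈ Set.Ioo (-1 : ℝ) 1 := by
  rcases lt_or_gt_of_ne hn with h | h
  · have := psi_neg hlam (show n ≤ -1 by omega) ht
    exact ⟨this.1, this.2.trans one_pos⟩
  · have := psi_pos hlam (show 1 ≤ n by omega) ht
    exact ⟨lt_trans (by norm_num) this.1, this.2⟩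

lemma denom_ne (hlam : 2 < lam) {n : ℤ} (hn : n ≠ 0) {t : ℝ} (ht : t ∈ Set.Icc (-1 : ℝ) 1) :
    (n : ℝ) * lam - t ≠ 0 := by
  rcases lt_or_gt_of_ne hn with h | h
  · exact ne_of_lt (by linarith [denom_lt hlam (by omega : n ≤ -1) ht])
  · exact ne_of_gt (by linarith [denom_gt hlam (by omega : 1 ≤ n) ht])

lemma Psi_mem (hlam : 2 < lam) {m : List ℤ} (hm : ∀ n ∈ m, n ≠ 0) {y : ℝ}
    (hy : y ∈ Set.Ioo (-1 : ℝ) 1) : Psi lam m y ∈ Set.Ioo (-1 : ℝ) 1 := by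
  induction m with
  | nil => exact hy
  | cons n m ih =>
    have h1 := ih (fun k hk => hm k (List.mem_cons_of_mem _ hk))
    exact psi_mem hlam (hm n (List.mem_cons_self)) (Set.Ioo_subset_Icc_self h1)

lemma Psi_contOn (hlam : 2 < lam) {m : List ℤ} (hm : ∀ n ∈ m, n ≠ 0) :
    ContinuousOn (Psi lam m) (Set.Icc (-1 : ℝ) 1) ∧
      Set.MapsTo (Psi lam m) (Set.Icc (-1 : ℝ) 1) (Set.Icc (-1 : ℝ) 1) := by
  induction m with
  | nil => exact ⟨continuousOn_id, Set.mapsTo_id _⟩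
  | cons n m ih =>
    obtain ⟨ihc, ihm⟩ := ih (fun k hk => hm k (List.mem_cons_of_mem _ hk))
    have hn := hm n (List.mem_cons_self)
    constructor
    · show ContinuousOn (fun y => ((n : ℝ) * lam - Psi lam m y)⁻¹) _
      exact (continuousOn_const.sub ihc).inv₀ fun y hy => denom_ne hlam hn (ihm hy)
    · intro y hy
      exact Set.Ioo_subset_Icc_self (psi_mem hlam hn (ihm hy))

lemma exists_fixed (hlam : 2 < lam) {m : List ℤ} (hm0 : m ≠ []) (hm : ∀ n ∈ m, n ≠ 0) :
    ∃ y ∈ Set.Ioo (-1 : ℝ) 1, Psi lam m y = y := by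
  obtain ⟨hc, hmaps⟩ := Psi_contOn hlam hm
  obtain ⟨n, m', rfl⟩ : ∃ n m', m = n :: m' := by
    cases m with
    | nil => exact absurd rfl hm0
    | cons n m' => exact ⟨n, m', rfl⟩
  have key : ∀ y ∈ Set.Icc (-1 : ℝ) 1, Psi lam (n :: m') y ∈ Set.Ioo (-1 : ℝ) 1 := by
    intro y hy
    have := (Psi_contOn hlam (fun k hk => hm k (List.mem_cons_of_mem _ hk))).2 hy
    exact psi_mem hlam (hm n (List.mem_cons_self)) this
  set f : ℝ → ℝ := fun y => Psi lam (n :: m') y - y with hf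
  have hfc : ContinuousOn f (Set.Icc (-1 : ℝ) 1) := hc.sub continuousOn_id
  have h1 : f 1 ≤ 0 := by
    have := key 1 (by norm_num)
    simp only [hf]
    linarith [this.2]
  have h2 : 0 ≤ f (-1) := by
    have := key (-1) (by norm_num)
    simp only [hf]
    linarith [this.1]
  have := intermediate_value_Icc' (by norm_num : (-1 : ℝ) ≤ 1) hfc ⟨h1, h2⟩
  obtain ⟨y, hy, hfy⟩ := this
  refine ⟨y, ?_, by simpa [hf, sub_eq_zero] using hfy⟩
  have : Psi lam (n :: m') y = y := by simpa [hf, sub_eq_zero] using hfy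
  rw [← this]
  exact key y hy

end Part2

section Matrices

variable {lam : ℝ} {S T g₂ g₃ : SL(2, ℝ)}

lemma coe_T_pow (hT : (T : M2) = !![1, lam; 0, 1]) (n : ℕ) :
    ((T ^ n : SL(2, ℝ)) : M2) = !![1, (n : ℝ) * lam; 0, 1] := by
  induction n with
  | zero => simp [Matrix.one_fin_two]
  | succ k ih =>
    rw [pow_succ, Matrix.SpecialLinearGroup.coe_mul, ih, hT, Matrix.mul_fin_two]
    norm_num
    ring

lemma coe_T_inv (hT : (T : M2) = !![1, lam; 0, 1]) :
    ((T⁻¹ : SL(2, ℝ)) : M2) = !![1, -lam; 0, 1] := by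
  rw [Matrix.SpecialLinearGroup.coe_inv, hT, Matrix.adjugate_fin_two]
  norm_num

lemma coe_T_inv_pow (hT : (T : M2) = !![1, lam; 0, 1]) (n : ℕ) :
    ((T⁻¹ ^ n : SL(2, ℝ)) : M2) = !![1, -((n : ℝ) * lam); 0, 1] := by
  induction n with
  | zero => simp [Matrix.one_fin_two]
  | succ k ih =>
    rw [pow_succ, Matrix.SpecialLinearGroup.coe_mul, ih, coe_T_inv hT, Matrix.mul_fin_two]
    norm_num
    ring

lemma coe_T_zpow (hT : (T : M2) = !![1, lam; 0, 1]) (a : ℤ) :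
    ((T ^ a : SL(2, ℝ)) : M2) = !![1, (a : ℝ) * lam; 0, 1] := by
  cases a with
  | ofNat n => rw [Int.ofNat_eq_coe, zpow_natCast, coe_T_pow hT]; norm_num
  | negSucc n =>
    rw [zpow_negSucc, ← inv_pow, coe_T_inv_pow hT]
    norm_num [Int.cast_negSucc]
    ring

lemma coe_g₂ (hS : (S : M2) = !![0, 1; -1, 0]) (hT : (T : M2) = !![1, lam; 0, 1])
    (hg₂ : g₂ = T⁻¹ * S) : (g₂ : M2) = !![lam, 1; -1, 0] := by
  rw [hg₂, Matrix.SpecialLinearGroup.coe_mul, coe_T_inv hT, hS, Matrix.mul_fin_two]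
  norm_num

lemma coe_g₃ (hS : (S : M2) = !![0, 1; -1, 0]) (hT : (T : M2) = !![1, lam; 0, 1])
    (hg₃ : g₃ = T * S) : (g₃ : M2) = !![-lam, 1; -1, 0] := by
  rw [hg₃, Matrix.SpecialLinearGroup.coe_mul, hT, hS, Matrix.mul_fin_two]
  norm_num

lemma moebius_eq {g : SL(2, ℝ)} {a b c d : ℝ} (h : (g : M2) = !![a, b; c, d]) (x : ℝ) :
    moebius g x = (a * x + b) / (c * x + d) ∧ moebiusDenom g x = c * x + d := by
  rw [moebius, moebiusDenom, h]
  norm_num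

end Matrices

section Block

variable {lam : ℝ} {S T g₂ g₃ : SL(2, ℝ)}

lemma block (hlam : 2 < lam) (hS : (S : M2) = !![0, 1; -1, 0])
    (hT : (T : M2) = !![1, lam; 0, 1]) (hg₂ : g₂ = T⁻¹ * S) (hg₃ : g₃ = T * S)
    (n : ℤ) (hn : n ≠ 0) (y : ℝ) (hy : y ∈ Set.Ioo (-1 : ℝ) 1) :
    ∃ B : List (ℝ × SL(2, ℝ)), B ≠ [] ∧ Chain lam T g₂ g₃ (psi lam n y) B y ∧
      (B.map Prod.snd).reverse.prod = T ^ n * S := by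
  have hyI : y ∈ Set.Icc (-1 : ℝ) 1 := Set.Ioo_subset_Icc_self hy
  have hy1 := hy.1
  have hy2 := hy.2
  set x := psi lam n y with hxdef
  have hd : (n : ℝ) * lam - y ≠ 0 := denom_ne hlam hn hyI
  have hxe : x * ((n : ℝ) * lam - y) = 1 := inv_mul_cancel₀ hd
  have hmg₂ := moebius_eq (coe_g₂ hS hT hg₂)
  have hmg₃ := moebius_eq (coe_g₃ hS hT hg₃)
  rcases lt_or_gt_of_ne hn with hneg | hpos
  · -- n ≤ -1
    have hx := psi_neg hlam (show n ≤ -1 by omega) hyI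
    have hx0 : x < 0 := hx.2
    have hx1 : -1 < x := hx.1
    have hm2 : moebius g₂ x = (lam * x + 1) / (-1 * x + 0) := (hmg₂ x).1
    have hd2 : moebiusDenom g₂ x ≠ 0 := by rw [(hmg₂ x).2]; intro h; nlinarith
    rcases eq_or_lt_of_le (show n ≤ -1 by omega) with hn1 | hn2
    · -- n = -1
      have hnr : (n : ℝ) = -1 := by exact_mod_cast congrArg Int.cast hn1
      refine ⟨[(x, g₂)], by simp, ⟨rfl, Or.inl ⟨⟨hx1, hx0⟩, rfl⟩, hd2, ?_⟩, ?_⟩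
      · show moebius g₂ x = y
        rw [hm2, div_eq_iff (by intro h; nlinarith)]
        rw [hnr] at hxe
        linear_combination -hxe
      · simp only [List.map_cons, List.map_nil, List.reverse_cons, List.reverse_nil,
          List.nil_append, List.prod_cons, List.prod_nil, mul_one]
        rw [hn1, hg₂, show T ^ (-1 : ℤ) = T⁻¹ from _root_.zpow_neg_one T]
    · -- n ≤ -2
      have hn2' : n ≤ -2 := by omega
      set mn : ℕ := (-n - 1).toNat with hmndef
      have hmn1 : 1 ≤ mn := by omega
      have hmnz : (mn : ℤ) = -n - 1 := Int.toNat_of_nonneg (by omega)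
      have hmnr : (mn : ℝ) = -(n : ℝ) - 1 := by exact_mod_cast congrArg Int.cast hmnz
      set p : ℝ := (mn : ℝ) * lam + y with hpdef
      have hmob2 : moebius g₂ x = p := by
        rw [hm2, div_eq_iff (by intro h; nlinarith)]
        rw [hpdef, hmnr]
        linear_combination -hxe
      have hmTm := moebius_eq (coe_T_inv_pow hT mn)
      refine ⟨[(x, g₂), (p, T⁻¹ ^ mn)], by simp, ⟨rfl, Or.inl ⟨⟨hx1, hx0⟩, rfl⟩, hd2,
        hmob2.symm, Or.inr (Or.inr (Or.inl ⟨mn, hmn1, ⟨?_, ?_⟩, rfl⟩)),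
        by rw [(hmTm p).2]; norm_num, ?_⟩, ?_⟩
      · show -1 + (mn : ℝ) * lam < p
        rw [hpdef]; linarith
      · show p < -1 + ((mn : ℝ) + 1) * lam
        rw [hpdef]; linarith
      · show moebius (T⁻¹ ^ mn) p = y
        rw [(hmTm p).1, hpdef]
        field_simp
        ring
      · simp only [List.map_cons, List.map_nil, List.reverse_cons, List.reverse_nil,
          List.nil_append, List.prod_cons, List.prod_nil, mul_one, List.singleton_append]
        show T⁻¹ ^ mn * g₂ = T ^ n * S
        rw [hg₂, ← mul_assoc, ← pow_succ, inv_pow, ← zpow_natCast T (mn + 1), ← _root_.zpow_neg,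
          show -((mn + 1 : ℕ) : ℤ) = n by omega]
  · -- 1 ≤ n
    have hx := psi_pos hlam (show 1 ≤ n by omega) hyI
    have hx0 : 0 < x := hx.1
    have hx1 : x < 1 := hx.2
    have hm3 : moebius g₃ x = (-lam * x + 1) / (-1 * x + 0) := (hmg₃ x).1
    have hd3 : moebiusDenom g₃ x ≠ 0 := by rw [(hmg₃ x).2]; intro h; nlinarith
    rcases eq_or_lt_of_le (show 1 ≤ n by omega) with hn1 | hn2
    · -- n = 1
      have hnr : (n : ℝ) = 1 := by exact_mod_cast congrArg Int.cast hn1.symm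
      refine ⟨[(x, g₃)], by simp, ⟨rfl, Or.inr (Or.inl ⟨⟨hx0, hx1⟩, rfl⟩), hd3, ?_⟩, ?_⟩
      · show moebius g₃ x = y
        rw [hm3, div_eq_iff (by intro h; nlinarith)]
        rw [hnr] at hxe
        linear_combination -hxe
      · simp only [List.map_cons, List.map_nil, List.reverse_cons, List.reverse_nil,
          List.nil_append, List.prod_cons, List.prod_nil, mul_one]
        rw [← hn1, zpow_one, hg₃]
    · -- 2 ≤ n
      have hn2' : 2 ≤ n := by omega
      set mn : ℕ := (n - 1).toNat with hmndef
      have hmn1 : 1 ≤ mn := by omega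
      have hmnz : (mn : ℤ) = n - 1 := Int.toNat_of_nonneg (by omega)
      have hmnr : (mn : ℝ) = (n : ℝ) - 1 := by exact_mod_cast congrArg Int.cast hmnz
      set p : ℝ := y - (mn : ℝ) * lam with hpdef
      have hmob3 : moebius g₃ x = p := by
        rw [hm3, div_eq_iff (by intro h; nlinarith)]
        rw [hpdef, hmnr]
        linear_combination -hxe
      have hmTm := moebius_eq (coe_T_pow hT mn)
      refine ⟨[(x, g₃), (p, T ^ mn)], by simp, ⟨rfl, Or.inr (Or.inl ⟨⟨hx0, hx1⟩, rfl⟩), hd3,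
        hmob3.symm, Or.inr (Or.inr (Or.inr ⟨mn, hmn1, ⟨?_, ?_⟩, rfl⟩)),
        by rw [(hmTm p).2]; norm_num, ?_⟩, ?_⟩
      · show 1 - ((mn : ℝ) + 1) * lam < p
        rw [hpdef]; linarith
      · show p < 1 - (mn : ℝ) * lam
        rw [hpdef]; linarith
      · show moebius (T ^ mn) p = y
        rw [(hmTm p).1, hpdef]
        field_simp
        ring
      · simp only [List.map_cons, List.map_nil, List.reverse_cons, List.reverse_nil,
          List.nil_append, List.prod_cons, List.prod_nil, mul_one, List.singleton_append]
        show T ^ mn * g₃ = T ^ n * S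
        rw [hg₃, ← mul_assoc, ← zpow_natCast T mn, ← _root_.zpow_add_one,
          show ((mn : ℕ) : ℤ) + 1 = n by omega]

lemma build (hlam : 2 < lam) (hS : (S : M2) = !![0, 1; -1, 0])
    (hT : (T : M2) = !![1, lam; 0, 1]) (hg₂ : g₂ = T⁻¹ * S) (hg₃ : g₃ = T * S)
    (m : List ℤ) (hm : ∀ n ∈ m, n ≠ 0) (y : ℝ) (hy : y ∈ Set.Ioo (-1 : ℝ) 1) :
    ∃ c, Chain lam T g₂ g₃ (Psi lam m y) c y ∧ (m ≠ [] → c ≠ []) ∧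
      (c.map Prod.snd).reverse.prod = ((m.map fun n => T ^ n * S).reverse).prod := by
  induction m with
  | nil => exact ⟨[], rfl, fun h => absurd rfl h, by simp⟩
  | cons n m ih =>
    obtain ⟨c', hc', _, hp'⟩ := ih (fun k hk => hm k (List.mem_cons_of_mem _ hk))
    have hy' : Psi lam m y ∈ Set.Ioo (-1 : ℝ) 1 :=
      Psi_mem hlam (fun k hk => hm k (List.mem_cons_of_mem _ hk)) hy
    obtain ⟨B, hBne, hBchain, hBprod⟩ :=
      block hlam hS hT hg₂ hg₃ n (hm n (List.mem_cons_self)) (Psi lam m y) hy'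
    refine ⟨B ++ c', ?_, ?_, ?_⟩
    · rw [Psi_cons]
      exact chain_append hBchain hc'
    · intro _
      simp [hBne]
    · rw [List.map_append, List.reverse_append, List.prod_append, hp', hBprod]
      simp

lemma part2 (hlam : 2 < lam) (hS : (S : M2) = !![0, 1; -1, 0])
    (hT : (T : M2) = !![1, lam; 0, 1]) (hg₂ : g₂ = T⁻¹ * S) (hg₃ : g₃ = T * S)
    (m : List ℤ) (hm0 : m ≠ []) (hm : ∀ n ∈ m, n ≠ 0) :
    ∃ (n : ℕ) (x : Fin (n + 1) → ℝ) (A : Fin (n + 1) → SL(2, ℝ)),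
      IsFIPeriodicOrbit lam T g₂ g₃ n x A ∧
      (List.ofFn A).reverse.prod = ((m.map fun n => T ^ n * S).reverse).prod := by
  obtain ⟨y, hy, hfix⟩ := exists_fixed hlam hm0 hm
  obtain ⟨c, hc, hcne, hcprod⟩ := build hlam hS hT hg₂ hg₃ m hm y hy
  rw [hfix] at hc
  obtain ⟨n, x, A, horb, hofn⟩ := chain_to_orbit (hcne hm0) hc
  exact ⟨n, x, A, horb, by rw [hofn, hcprod]⟩

end Block

section Part1

variable {lam : ℝ} {S T : SL(2, ℝ)}

/-- Word of the form `(S T^{n₁})(S T^{n₂})⋯`. -/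
def word (S T : SL(2, ℝ)) (l : List ℤ) : SL(2, ℝ) := (l.map fun n => S * T ^ n).prod

/-- Word of the form `(T^{n₁} S)(T^{n₂} S)⋯`. -/
def wrd (S T : SL(2, ℝ)) (m : List ℤ) : SL(2, ℝ) := (m.map fun n => T ^ n * S).prod

lemma word_cons (b : ℤ) (l : List ℤ) : word S T (b :: l) = (S * T ^ b) * word S T l := by
  simp [word]

lemma coe_SS (hS : (S : M2) = !![0, 1; -1, 0]) : ((S * S : SL(2, ℝ)) : M2) = -1 := by
  rw [Matrix.SpecialLinearGroup.coe_mul, hS, Matrix.mul_fin_two]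
  ext i j
  fin_cases i <;> fin_cases j <;> norm_num

lemma coe_S_inv (hS : (S : M2) = !![0, 1; -1, 0]) : ((S⁻¹ : SL(2, ℝ)) : M2) = -(S : M2) := by
  rw [Matrix.SpecialLinearGroup.coe_inv, hS, Matrix.adjugate_fin_two]
  ext i j
  fin_cases i <;> fin_cases j <;> norm_num

lemma word_mul_S (c : ℤ) (l : List ℤ) : T ^ c * word S T l * S = wrd S T (c :: l) := by
  induction l generalizing c with
  | nil => simp [word, wrd]
  | cons a l ih =>
    rw [word_cons]
    have h2 : wrd S T (c :: a :: l) = (T ^ c * S) * wrd S T (a :: l) := by simp [wrd, mul_assoc]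
    rw [h2, ← ih a]
    group

lemma tr_conj (h g : SL(2, ℝ)) :
    Matrix.trace ((h * g * h⁻¹ : SL(2, ℝ)) : M2) = Matrix.trace (g : M2) := by
  rw [Matrix.SpecialLinearGroup.coe_mul, Matrix.SpecialLinearGroup.coe_mul,
    Matrix.trace_mul_cycle, ← Matrix.SpecialLinearGroup.coe_mul, inv_mul_cancel]
  simp

lemma conj_smul {h g w u : SL(2, ℝ)} {ε : ℝ} (heq : (g : M2) = ε • ((w : SL(2, ℝ)) : M2))
    (hid : h * w * h⁻¹ = u) :
    ((h * g * h⁻¹ : SL(2, ℝ)) : M2) = ε • ((u : SL(2, ℝ)) : M2) := by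
  rw [← hid, Matrix.SpecialLinearGroup.coe_mul, Matrix.SpecialLinearGroup.coe_mul, heq,
    mul_smul_comm, smul_mul_assoc, Matrix.SpecialLinearGroup.coe_mul,
    Matrix.SpecialLinearGroup.coe_mul]

lemma nf_step_S (hS : (S : M2) = !![0, 1; -1, 0]) {g : SL(2, ℝ)} {ε : ℝ} {a : ℤ} {l : List ℤ}
    (hε : ε = 1 ∨ ε = -1) (hl : ∀ n ∈ l.dropLast, n ≠ 0)
    (heq : (g : M2) = ε • ((T ^ a * word S T l : SL(2, ℝ)) : M2)) :
    ∃ (ε' : ℝ) (a' : ℤ) (l' : List ℤ), (ε' = 1 ∨ ε' = -1) ∧ (∀ n ∈ l'.dropLast, n ≠ 0) ∧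
      ((S * g : SL(2, ℝ)) : M2) = ε' • ((T ^ a' * word S T l' : SL(2, ℝ)) : M2) := by
  by_cases ha : a = 0
  · subst ha
    match l, hl with
    | [], _ =>
      refine ⟨ε, 0, [0], hε, by simp, ?_⟩
      rw [Matrix.SpecialLinearGroup.coe_mul, heq, mul_smul_comm,
        ← Matrix.SpecialLinearGroup.coe_mul]
      congr 2
      simp [word]
      rfl
    | b :: l', hl =>
      refine ⟨-ε, b, l', by rcases hε with h | h <;> simp [h], fun n hn => ?_, ?_⟩
      · apply hl
        cases l' with
        | nil => simp at hn
        | cons c l'' => exact List.mem_cons_of_mem _ hn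
      · rw [Matrix.SpecialLinearGroup.coe_mul, heq, mul_smul_comm,
          ← Matrix.SpecialLinearGroup.coe_mul]
        have hident : S * (T ^ (0 : ℤ) * word S T (b :: l')) =
            (S * S) * (T ^ b * word S T l') := by
          rw [word_cons]; group
        rw [hident, Matrix.SpecialLinearGroup.coe_mul, coe_SS hS, neg_one_mul, smul_neg,
          ← neg_smul]
  · refine ⟨ε, 0, a :: l, hε, fun n hn => ?_, ?_⟩
    · cases l with
      | nil => simp at hn
      | cons c l'' =>
        rcases (by simpa using hn : n = a ∨ n ∈ (c :: l'').dropLast) with h | h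
        · subst h; exact ha
        · exact hl n h
    · rw [Matrix.SpecialLinearGroup.coe_mul, heq, mul_smul_comm,
        ← Matrix.SpecialLinearGroup.coe_mul]
      congr 2
      rw [word_cons]
      group
      rfl

lemma normal_form (hS : (S : M2) = !![0, 1; -1, 0]) {g : SL(2, ℝ)}
    (hg : g ∈ Subgroup.closure ({S, T} : Set SL(2, ℝ))) :
    ∃ (ε : ℝ) (a : ℤ) (l : List ℤ), (ε = 1 ∨ ε = -1) ∧ (∀ n ∈ l.dropLast, n ≠ 0) ∧
      (g : M2) = ε • ((T ^ a * word S T l : SL(2, ℝ)) : M2) := by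
  have hg' : g ∈ Submonoid.closure (({S, T} : Set SL(2, ℝ)) ∪ ({S, T} : Set SL(2, ℝ))⁻¹) := by
    rw [← Subgroup.closure_toSubmonoid]; exact hg
  obtain ⟨L, hL, rfl⟩ := Submonoid.exists_list_of_mem_closure hg'
  clear hg hg'
  induction L with
  | nil => exact ⟨1, 0, [], Or.inl rfl, by simp, by simp [word]⟩
  | cons v L ih =>
    obtain ⟨ε, a, l, hε, hl, heq⟩ := ih (fun x hx => hL x (List.mem_cons_of_mem _ hx))
    have hv := hL v (List.mem_cons_self)
    rw [List.prod_cons]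
    rcases hv with hv | hv
    · rcases hv with rfl | hv
      · -- v = S
        exact nf_step_S hS hε hl heq
      · -- v = T
        rw [Set.mem_singleton_iff] at hv
        subst hv
        refine ⟨ε, a + 1, l, hε, hl, ?_⟩
        rw [Matrix.SpecialLinearGroup.coe_mul, heq, mul_smul_comm,
          ← Matrix.SpecialLinearGroup.coe_mul]
        congr 2
        group
        rfl
    · rw [Set.mem_inv] at hv
      rcases hv with hv | hv
      · -- v⁻¹ = S
        have hvS : v = S⁻¹ := by rw [← hv, inv_inv]
        subst hvS
        obtain ⟨ε', a', l', hε', hl', heq'⟩ := nf_step_S hS hε hl heq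
        refine ⟨-ε', a', l', by rcases hε' with h | h <;> simp [h], hl', ?_⟩
        have : ((S⁻¹ * L.prod : SL(2, ℝ)) : M2) = -(((S * L.prod : SL(2, ℝ)) : M2)) := by
          rw [Matrix.SpecialLinearGroup.coe_mul, Matrix.SpecialLinearGroup.coe_mul,
            coe_S_inv hS, neg_mul]
        rw [this, heq', ← neg_smul]
      · -- v⁻¹ = T
        rw [Set.mem_singleton_iff] at hv
        have hvT : v = T⁻¹ := by rw [← hv, inv_inv]
        subst hvT
        refine ⟨ε, a - 1, l, hε, hl, ?_⟩
        rw [Matrix.SpecialLinearGroup.coe_mul, heq, mul_smul_comm,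
          ← Matrix.SpecialLinearGroup.coe_mul]
        congr 2
        group
        rfl

lemma reduce (hlam : 2 < lam) (hS : (S : M2) = !![0, 1; -1, 0])
    (hT : (T : M2) = !![1, lam; 0, 1]) :
    ∀ (N : ℕ) (g : SL(2, ℝ)) (ε : ℝ) (a : ℤ) (l : List ℤ), l.length ≤ N →
      (ε = 1 ∨ ε = -1) → (∀ n ∈ l.dropLast, n ≠ 0) →
      (g : M2) = ε • ((T ^ a * word S T l : SL(2, ℝ)) : M2) →
      2 < |Matrix.trace (g : M2)| →
      ∃ h ∈ Subgroup.closure ({S, T} : Set SL(2, ℝ)), ∃ (ε' : ℝ) (m : List ℤ),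
        (ε' = 1 ∨ ε' = -1) ∧ m ≠ [] ∧ (∀ n ∈ m, n ≠ 0) ∧
        ((h * g * h⁻¹ : SL(2, ℝ)) : M2) = ε' • ((wrd S T m : SL(2, ℝ)) : M2) := by
  have hSmem : S ∈ Subgroup.closure ({S, T} : Set SL(2, ℝ)) :=
    Subgroup.subset_closure (by simp)
  have hTmem : T ∈ Subgroup.closure ({S, T} : Set SL(2, ℝ)) :=
    Subgroup.subset_closure (by simp)
  intro N
  induction N with
  | zero =>
    intro g ε a l hlen hε hl heq htr
    exfalso
    have hl0 : l = [] := List.length_eq_zero_iff.mp (Nat.le_zero.mp hlen)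
    subst hl0
    have hTa : ((T ^ a * word S T [] : SL(2, ℝ)) : M2) = !![1, (a : ℝ) * lam; 0, 1] := by
      rw [show T ^ a * word S T [] = T ^ a by simp [word], coe_T_zpow hT]
    rw [heq, hTa, Matrix.trace_smul, Matrix.trace_fin_two_of] at htr
    rcases hε with h | h <;> subst h <;> norm_num at htr
  | succ N ihN =>
    intro g ε a l hlen hε hl heq htr
    rcases List.eq_nil_or_concat l with hl0 | ⟨init, ar, rfl⟩
    · subst hl0
      exfalso
      have hTa : ((T ^ a * word S T [] : SL(2, ℝ)) : M2) = !![1, (a : ℝ) * lam; 0, 1] := by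
        rw [show T ^ a * word S T [] = T ^ a by simp [word], coe_T_zpow hT]
      rw [heq, hTa, Matrix.trace_smul, Matrix.trace_fin_two_of] at htr
      rcases hε with h | h <;> subst h <;> norm_num at htr
    · simp only [List.concat_eq_append] at hlen hl heq
      have hinit : ∀ n ∈ init, n ≠ 0 := by
        intro n hn
        exact hl n (by simp [List.dropLast_concat, hn])
      by_cases hb : ar + a = 0
      · have har : ar = -a := by omega
        subst har
        cases init with
        | nil =>
          exfalso
          have hident : T ^ (-a) * (T ^ a * word S T ([] ++ [-a])) * (T ^ (-a))⁻¹ = S := by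
            simp only [List.nil_append, word, List.map_cons, List.map_nil, List.prod_cons,
              List.prod_nil, mul_one]
            group
          have hcoe : (((T ^ (-a) : SL(2, ℝ)) * g * (T ^ (-a))⁻¹ : SL(2, ℝ)) : M2)
              = ε • ((S : SL(2, ℝ)) : M2) := conj_smul heq hident
          have htr2 := tr_conj (T ^ (-a)) g
          rw [hcoe, hS, Matrix.trace_smul, Matrix.trace_fin_two_of] at htr2
          rw [← htr2] at htr
          rcases hε with h | h <;> subst h <;> norm_num at htr
        | cons c init₂ =>
          set g₂ : SL(2, ℝ) := (S * T ^ (-a)) * g * (S * T ^ (-a))⁻¹ with hg₂def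
          have hident : (S * T ^ (-a)) * (T ^ a * word S T ((c :: init₂) ++ [-a])) *
              (S * T ^ (-a))⁻¹ = (S * S) * (T ^ c * word S T init₂) := by
            simp only [word, List.cons_append, List.map_cons, List.map_append, List.map_nil,
              List.prod_cons, List.prod_append, List.prod_nil, mul_one, zpow_zero]
            group
          have hcoe : ((g₂ : SL(2, ℝ)) : M2)
              = (-ε) • ((T ^ c * word S T init₂ : SL(2, ℝ)) : M2) := by
            have h0 := conj_smul heq hident
            rw [← hg₂def] at h0
            rw [h0, Matrix.SpecialLinearGroup.coe_mul, coe_SS hS, neg_one_mul, smul_neg,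
              ← neg_smul]
          have htr2 : 2 < |Matrix.trace ((g₂ : SL(2, ℝ)) : M2)| := by
            rw [hg₂def, tr_conj]; exact htr
          have hlen2 : init₂.length ≤ N := by
            simp only [List.length_append, List.length_cons, List.length_nil] at hlen
            omega
          have hl2 : ∀ n ∈ init₂.dropLast, n ≠ 0 := fun n hn =>
            hinit n (List.mem_cons_of_mem _ (List.dropLast_subset _ hn))
          obtain ⟨h₂, hh₂, ε', m, hε', hm0, hm, hconj⟩ :=
            ihN g₂ (-ε) c init₂ hlen2
              (by rcases hε with h | h <;> simp [h]) hl2 hcoe htr2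
          refine ⟨h₂ * (S * T ^ (-a)), ?_, ε', m, hε', hm0, hm, ?_⟩
          · exact mul_mem hh₂ (mul_mem hSmem (zpow_mem hTmem _))
          · have : h₂ * (S * T ^ (-a)) * g * (h₂ * (S * T ^ (-a)))⁻¹ = h₂ * g₂ * h₂⁻¹ := by
              rw [hg₂def]; group
            rw [this]
            exact hconj
      · -- ar + a ≠ 0 : cyclically reduced
        refine ⟨T ^ (ar + a) * T ^ (-a), mul_mem (zpow_mem hTmem _) (zpow_mem hTmem _),
          ε, (ar + a) :: init, hε, by simp, ?_, ?_⟩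
        · intro n hn
          rcases List.mem_cons.mp hn with h | h
          · subst h; exact hb
          · exact hinit n h
        · have hident : (T ^ (ar + a) * T ^ (-a)) * (T ^ a * word S T (init ++ [ar])) *
              (T ^ (ar + a) * T ^ (-a))⁻¹ = T ^ (ar + a) * word S T init * S := by
            have hw : word S T (init ++ [ar]) = word S T init * (S * T ^ ar) := by
              simp [word]
            rw [hw]
            group
          rw [word_mul_S] at hident
          exact conj_smul heq hident

end Part1

end FIproof

/-- For `λ > 2`, every hyperbolic `g ∈ Γ_λ` (i.e. `|tr g| > 2`) is, up to
sign and `Γ_λ`-conjugacy, the product of the matrices associated to some `F_I`-periodic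
orbit: there are an orbit `x₁,…,xₙ` with matrices `A₁,…,Aₙ`, an `h ∈ Γ_λ` and a sign
`ε ∈ {1,−1}` with `h g h⁻¹ = ε·(Aₙ·…·A₁)`. -/
theorem hyperbolic_conjugate_to_FI_orbit_product
    (lam : ℝ) (hlam : 2 < lam)
    (S T g₂ g₃ : SL(2, ℝ))
    (hS : (S : Matrix (Fin 2) (Fin 2) ℝ) = !![0, 1; -1, 0])
    (hT : (T : Matrix (Fin 2) (Fin 2) ℝ) = !![1, lam; 0, 1])
    (hg₂ : g₂ = T⁻¹ * S) (hg₃ : g₃ = T * S)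
    (Γ : Subgroup SL(2, ℝ)) (hΓ : Γ = Subgroup.closure {S, T}) :
    ∀ g ∈ Γ, 2 < |Matrix.trace (g : Matrix (Fin 2) (Fin 2) ℝ)| →
      ∃ (n : ℕ) (x : Fin (n + 1) → ℝ) (A : Fin (n + 1) → SL(2, ℝ)),
        IsFIPeriodicOrbit lam T g₂ g₃ n x A ∧
        ∃ h ∈ Γ, ∃ ε : ℝ, (ε = 1 ∨ ε = -1) ∧
          ((h * g * h⁻¹ : SL(2, ℝ)) : Matrix (Fin 2) (Fin 2) ℝ) =
            ε • (((List.ofFn A).reverse.prod : SL(2, ℝ)) : Matrix (Fin 2) (Fin 2) ℝ) := by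
  subst hΓ
  intro g hg htr
  obtain ⟨ε, a, l, hε, hl, heq⟩ := FIproof.normal_form hS hg
  obtain ⟨h, hh, ε', m, hε', hm0, hm, hconj⟩ :=
    FIproof.reduce hlam hS hT l.length g ε a l le_rfl hε hl heq htr
  obtain ⟨n, x, A, horb, hprod⟩ := FIproof.part2 hlam hS hT hg₂ hg₃ m.reverse
    (by simpa using hm0) (fun k hk => hm k (List.mem_reverse.mp hk))
  refine ⟨n, x, A, horb, h, hh, ε', hε', ?_⟩
  rw [hprod]
  have hw : ((m.reverse.map fun n => T ^ n * S).reverse).prod = FIproof.wrd S T m := by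
    rw [List.map_reverse, List.reverse_reverse]
    rfl
  rw [hw]
  exact hconj
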